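/- (Core computation of Proposition 1) Let P ≥ 0, d > 0, R > 0, and let α, ψ be real. Then (1/(π R²))·∫₀^{2π} ∫₀^{R} P·d^{−α}·[1 − (α/2)·((r/d)² + 2(r/d)·cos(θ + ψ)) + (α(α+2)/8)·((r/d)² + 2(r/d)·cos(θ + ψ))²]·r dr dθ = P·d^{−α}·[1 + (α²/8)·(R⁴/(3d⁴) + R²/d²) + (α/4)·(R⁴/(3d⁴))]. In particular the value does not depend on ψ. -/

import Mathlib

open Real

lemma poly_int (a b c e f R : ℝ) :
    ∫ r in (0:ℝ)..R, (a*r + b*r^2 + c*r^3 + e*r^4 + f*r^5)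
      = a*R^2/2 + b*R^3/3 + c*R^4/4 + e*R^5/5 + f*R^6/6 := by
  have h : ∀ x ∈ Set.uIcc (0:ℝ) R,
      HasDerivAt (fun r : ℝ => a*r^2/2 + b*r^3/3 + c*r^4/4 + e*r^5/5 + f*r^6/6)
        (a*x + b*x^2 + c*x^3 + e*x^4 + f*x^5) x := by
    intro x _
    have h2 : HasDerivAt (fun r : ℝ => r^2) (2*x^1) x := by simpa using hasDerivAt_pow 2 x
    have h3 : HasDerivAt (fun r : ℝ => r^3) (3*x^2) x := by simpa using hasDerivAt_pow 3 x
    have h4 : HasDerivAt (fun r : ℝ => r^4) (4*x^3) x := by simpa using hasDerivAt_pow 4 x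
    have h5 : HasDerivAt (fun r : ℝ => r^5) (5*x^4) x := by simpa using hasDerivAt_pow 5 x
    have h6 : HasDerivAt (fun r : ℝ => r^6) (6*x^5) x := by simpa using hasDerivAt_pow 6 x
    have := ((((h2.const_mul (a/2)).add (h3.const_mul (b/3))).add
      (h4.const_mul (c/4))).add (h5.const_mul (e/5))).add (h6.const_mul (f/6))
    refine (this.congr_deriv (by ring)).congr_of_eventuallyEq (Filter.Eventually.of_forall fun r => ?_)
    · simp only [Pi.add_apply]; ring
  rw [intervalIntegral.integral_eq_sub_of_hasDerivAt h
    (Continuous.intervalIntegrable (by continuity) _ _)]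
  ring

set_option maxHeartbeats 1000000 in
theorem prop1_average_interference (P d R α ψ : ℝ) (hP : 0 ≤ P) (hd : 0 < d) (hR : 0 < R) :
    (1 / (π * R ^ 2)) *
        (∫ θ in (0:ℝ)..(2 * π), ∫ r in (0:ℝ)..R,
          P * d ^ (-α) *
            (1 - (α / 2) * ((r / d) ^ 2 + 2 * (r / d) * Real.cos (θ + ψ))
              + (α * (α + 2) / 8) *
                  ((r / d) ^ 2 + 2 * (r / d) * Real.cos (θ + ψ)) ^ 2) * r)
      = P * d ^ (-α) *
          (1 + (α ^ 2 / 8) * (R ^ 4 / (3 * d ^ 4) + R ^ 2 / d ^ 2)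
            + (α / 4) * (R ^ 4 / (3 * d ^ 4))) := by
  set K := P * d ^ (-α) with hK
  have hd0 : d ≠ 0 := ne_of_gt hd
  -- coefficients
  obtain ⟨A, hA⟩ : ∃ A : ℝ, A = K * (R^2/2 - α/2 * (R^4/(4*d^2)) + α*(α+2)/8 * (R^6/(6*d^4))) := ⟨_, rfl⟩
  obtain ⟨B, hB⟩ : ∃ B : ℝ, B = K * (- α/2 * (2*R^3/(3*d)) + α*(α+2)/8 * (4*R^5/(5*d^3))) := ⟨_, rfl⟩
  obtain ⟨C, hC⟩ : ∃ C : ℝ, C = K * (α*(α+2)/8 * (R^4/d^2)) := ⟨_, rfl⟩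
  have inner : ∀ θ : ℝ,
      (∫ r in (0:ℝ)..R,
        K * (1 - (α / 2) * ((r / d) ^ 2 + 2 * (r / d) * Real.cos (θ + ψ))
          + (α * (α + 2) / 8) *
              ((r / d) ^ 2 + 2 * (r / d) * Real.cos (θ + ψ)) ^ 2) * r)
      = A + B * Real.cos (θ + ψ) + C * Real.cos (θ + ψ) ^ 2 := by
    intro θ
    set c := Real.cos (θ + ψ) with hc
    have heq : (fun r : ℝ =>
        K * (1 - (α / 2) * ((r / d) ^ 2 + 2 * (r / d) * c)
          + (α * (α + 2) / 8) * ((r / d) ^ 2 + 2 * (r / d) * c) ^ 2) * r)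
        = fun r : ℝ => (K) * r + (K * (- α/2 * (2*c/d))) * r^2
            + (K * (- α/2 * (1/d^2) + α*(α+2)/8 * (4*c^2/d^2))) * r^3
            + (K * (α*(α+2)/8 * (4*c/d^3))) * r^4
            + (K * (α*(α+2)/8 * (1/d^4))) * r^5 := by
      funext r; field_simp; ring
    rw [heq, poly_int, hA, hB, hC]
    field_simp
    ring
  have houter : (∫ θ in (0:ℝ)..(2 * π),
      A + B * Real.cos (θ + ψ) + C * Real.cos (θ + ψ) ^ 2)
      = A * (2*π) + C * π := by
    have i1 : (∫ θ in (0:ℝ)..(2 * π), Real.cos (θ + ψ)) = 0 := by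
      rw [intervalIntegral.integral_comp_add_right (fun x => Real.cos x) ψ]
      simp [Real.sin_add_two_pi, add_comm (2*π) ψ]
    have i2 : (∫ θ in (0:ℝ)..(2 * π), Real.cos (θ + ψ) ^ 2) = π := by
      rw [intervalIntegral.integral_comp_add_right (fun x => Real.cos x ^ 2) ψ]
      rw [integral_cos_sq]
      rw [add_comm (2*π) ψ, Real.sin_add_two_pi, Real.cos_add_two_pi]
      ring
    have j1 : IntervalIntegrable (fun _ : ℝ => A) MeasureTheory.volume 0 (2*π) :=
      intervalIntegrable_const
    have j2 : IntervalIntegrable (fun θ : ℝ => B * Real.cos (θ + ψ)) MeasureTheory.volume 0 (2*π) :=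
      Continuous.intervalIntegrable (by fun_prop) _ _
    have j3 : IntervalIntegrable (fun θ : ℝ => C * Real.cos (θ + ψ) ^ 2) MeasureTheory.volume 0 (2*π) :=
      Continuous.intervalIntegrable (by fun_prop) _ _
    rw [intervalIntegral.integral_add (j1.add j2) j3, intervalIntegral.integral_add j1 j2,
      intervalIntegral.integral_const, intervalIntegral.integral_const_mul,
      intervalIntegral.integral_const_mul, i1, i2]
    simp [smul_eq_mul]
    ring
  have hmain : (∫ θ in (0:ℝ)..(2 * π), ∫ r in (0:ℝ)..R,
          K *
            (1 - (α / 2) * ((r / d) ^ 2 + 2 * (r / d) * Real.cos (θ + ψ))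
              + (α * (α + 2) / 8) *
                  ((r / d) ^ 2 + 2 * (r / d) * Real.cos (θ + ψ)) ^ 2) * r)
      = A * (2*π) + C * π := by
    rw [← houter]
    exact intervalIntegral.integral_congr (fun θ _ => inner θ)
  rw [hmain, hA, hC]
  have hπ : (π : ℝ) ≠ 0 := Real.pi_ne_zero
  have hR0 : R ≠ 0 := ne_of_gt hR
  field_simp
  ring
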